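/- Let O be the ring of integers of a finite extension of Q_p with uniformizer ϖ, V a 2-dimensional vector space over K = Frac(O), and ρ : G → Aut_K(V) a continuous irreducible representation of a compact group G with tr ρ mod ϖ = ψ_1 + ψ_2 for distinct characters ψ_1, ψ_2 : G → (O/ϖ)^×. Then the number of isomorphism classes of G-stable lattices in V equals ord_ϖ(I(ρ)) + 1, where I(ρ) is the reducibility ideal of O generated by the products b(g)c(g') of off-diagonal entries in a basis diagonalizing ρ(g_0) for g_0 with ψ_1(g_0) ≠ ψ_2(g_0). -/

import Mathlib

open Pointwise

section

variable {O : Type*} [CommRing O] [IsDomain O] [IsDiscreteValuationRing O]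
  {K : Type*} [Field K] [Algebra O K] [IsFractionRing O K]
  {G : Type*} [Group G]

/-- `T` is an `O`-lattice in `V = K²`. -/
def IsLat (T : Submodule O (Fin 2 → K)) : Prop :=
  T.FG ∧ Submodule.span K (T : Set (Fin 2 → K)) = ⊤

/-- `T` is stable under the representation `ρ`. -/
def IsStable (ρ : G →* GL (Fin 2) K) (T : Submodule O (Fin 2 → K)) : Prop :=
  ∀ g : G, ∀ v ∈ T, Matrix.mulVec (ρ g : Matrix (Fin 2) (Fin 2) K) v ∈ T

/-- `T` and `T'` are isomorphic as `O[G]`-modules. -/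
def LatIso (ρ : G →* GL (Fin 2) K) (T T' : Submodule O (Fin 2 → K)) : Prop :=
  ∃ e : T ≃ₗ[O] T', ∀ (g : G) (v : Fin 2 → K) (hv : v ∈ T)
    (hgv : Matrix.mulVec (ρ g : Matrix (Fin 2) (Fin 2) K) v ∈ T),
    (e ⟨Matrix.mulVec (ρ g : Matrix (Fin 2) (Fin 2) K) v, hgv⟩ : Fin 2 → K) =
      Matrix.mulVec (ρ g : Matrix (Fin 2) (Fin 2) K) (e ⟨v, hv⟩)

set_option linter.unusedSectionVars false
set_option maxHeartbeats 1000000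
set_option linter.unusedTactic false

lemma div_integer (z w : K) (hw : w ≠ 0) :
    (∃ o : O, z = algebraMap O K o * w) ∨ (∃ o : O, w = algebraMap O K o * z) := by
  by_cases hz : z = 0
  · exact Or.inl ⟨0, by simp [hz]⟩
  rcases ValuationRing.isInteger_or_isInteger O (z / w) with ⟨o, ho⟩ | ⟨o, ho⟩
  · left; field_simp at ho; exact ⟨o, ho.symm⟩
  · right; rw [inv_div] at ho; field_simp at ho; exact ⟨o, ho.symm⟩

/-- The span of a finite set in `K` is cyclic. -/
lemma span_finset_cyclic (s : Finset K) :
    ∃ z : K, Submodule.span O (s : Set K) = Submodule.span O {z} := by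
  classical
  induction s using Finset.induction_on with
  | empty => exact ⟨0, by simp⟩
  | @insert a s ha ih =>
    obtain ⟨z, hz⟩ := ih
    rw [Finset.coe_insert, Submodule.span_insert, hz]
    by_cases haz : a = 0
    · exact ⟨z, by simp [haz]⟩
    by_cases hzz : z = 0
    · exact ⟨a, by simp [hzz]⟩
    rcases div_integer (O := O) a z hzz with ⟨o, ho⟩ | ⟨o, ho⟩
    · refine ⟨z, ?_⟩
      rw [sup_eq_right]
      rw [Submodule.span_singleton_le_iff_mem, ho, ← Algebra.smul_def]
      exact Submodule.smul_mem _ o (Submodule.mem_span_singleton_self z)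
    · refine ⟨a, ?_⟩
      rw [sup_eq_left]
      rw [Submodule.span_singleton_le_iff_mem, ho, ← Algebra.smul_def]
      exact Submodule.smul_mem _ o (Submodule.mem_span_singleton_self a)

lemma fg_cyclic (M : Submodule O K) (h : M.FG) : ∃ z : K, M = Submodule.span O {z} := by
  obtain ⟨s, rfl⟩ := h
  exact span_finset_cyclic s

lemma latIso_refl (ρ : G →* GL (Fin 2) K) (T : Submodule O (Fin 2 → K)) : LatIso ρ T T :=
  ⟨LinearEquiv.refl O T, fun _ _ _ _ => rfl⟩

lemma latIso_symm {ρ : G →* GL (Fin 2) K} {T T' : Submodule O (Fin 2 → K)}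
    (hT : IsStable ρ T) (h : LatIso ρ T T') : LatIso ρ T' T := by
  obtain ⟨e, he⟩ := h
  refine ⟨e.symm, fun g v hv hgv => ?_⟩
  set w := e.symm ⟨v, hv⟩ with hw
  have hMw : Matrix.mulVec (ρ g : Matrix (Fin 2) (Fin 2) K) (w : Fin 2 → K) ∈ T :=
    hT g _ w.2
  have key : e ⟨Matrix.mulVec (ρ g : Matrix (Fin 2) (Fin 2) K) (w : Fin 2 → K), hMw⟩
      = ⟨Matrix.mulVec (ρ g : Matrix (Fin 2) (Fin 2) K) v, hgv⟩ := by
    apply Subtype.ext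
    rw [he g (w : Fin 2 → K) w.2 hMw]
    congr 1
    rw [hw, Subtype.coe_eta, e.apply_symm_apply]
  have := congrArg e.symm key
  rw [e.symm_apply_apply] at this
  rw [← this]

lemma latIso_trans {ρ : G →* GL (Fin 2) K} {T₁ T₂ T₃ : Submodule O (Fin 2 → K)}
    (h12 : LatIso ρ T₁ T₂) (h23 : LatIso ρ T₂ T₃) : LatIso ρ T₁ T₃ := by
  obtain ⟨e₁, he₁⟩ := h12
  obtain ⟨e₂, he₂⟩ := h23
  refine ⟨e₁.trans e₂, fun g v hv hgv => ?_⟩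
  have h1 := he₁ g v hv hgv
  have hmem : Matrix.mulVec (ρ g : Matrix (Fin 2) (Fin 2) K) ((e₁ ⟨v, hv⟩ : Fin 2 → K)) ∈ T₂ := by
    rw [← h1]; exact (e₁ ⟨Matrix.mulVec (ρ g : Matrix (Fin 2) (Fin 2) K) v, hgv⟩).2
  have h2 := he₂ g (e₁ ⟨v, hv⟩ : Fin 2 → K) (e₁ ⟨v, hv⟩).2 hmem
  simp only [LinearEquiv.trans_apply]
  have key : e₁ ⟨Matrix.mulVec (ρ g : Matrix (Fin 2) (Fin 2) K) v, hgv⟩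
      = ⟨Matrix.mulVec (ρ g : Matrix (Fin 2) (Fin 2) K) (e₁ ⟨v, hv⟩ : Fin 2 → K), hmem⟩ :=
    Subtype.ext h1
  rw [key, h2]

lemma latIso_smul (ρ : G →* GL (Fin 2) K) (s : K) (hs : s ≠ 0)
    (T T' : Submodule O (Fin 2 → K))
    (h1 : ∀ v ∈ T, s • v ∈ T') (h2 : ∀ v ∈ T', s⁻¹ • v ∈ T) : LatIso ρ T T' := by
  refine ⟨{ toFun := fun v => ⟨s • (v : Fin 2 → K), h1 _ v.2⟩
            map_add' := fun v w => by apply Subtype.ext; simp [smul_add]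
            map_smul' := fun o v => by
              apply Subtype.ext
              show s • ((o • v : T) : Fin 2 → K) = o • (s • (v : Fin 2 → K))
              rw [SetLike.val_smul, smul_comm]
            invFun := fun v => ⟨s⁻¹ • (v : Fin 2 → K), h2 _ v.2⟩
            left_inv := fun v => by apply Subtype.ext; simp [smul_smul, inv_mul_cancel₀ hs]
            right_inv := fun v => by apply Subtype.ext; simp [smul_smul, mul_inv_cancel₀ hs] },
    fun g v hv hgv => ?_⟩
  simp [Matrix.mulVec_smul]

/-- For `ρ : G → Aut_K(V)` continuous irreducible (`G` compact) with
residual semi-simplification `ψ₁ ⊕ ψ₂`, `ψ₁ ≠ ψ₂`, in a basis diagonalizing `ρ g₀`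
(`ψ₁ g₀ ≠ ψ₂ g₀`), the number of isomorphism classes of `G`-stable lattices equals
`ord_ϖ I(ρ) + 1`, where `I(ρ)` is the reducibility ideal generated by the products
`b(g)c(g')` of the off-diagonal entries. -/
theorem card_latticeClasses_eq_ord_reducibilityIdeal_add_one
    (ϖ : O) (hϖ : Irreducible ϖ)
    [TopologicalSpace K] [IsTopologicalRing K]
    [TopologicalSpace G] [IsTopologicalGroup G] [CompactSpace G]
    (ρ : G →* GL (Fin 2) K)
    (hcont : Continuous fun g : G => (ρ g : Matrix (Fin 2) (Fin 2) K))
    (hirr : ∀ W : Submodule K (Fin 2 → K),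
      (∀ g : G, ∀ v ∈ W, Matrix.mulVec (ρ g : Matrix (Fin 2) (Fin 2) K) v ∈ W) →
      W = ⊥ ∨ W = ⊤)
    (ψ₁ ψ₂ : G →* (O ⧸ Ideal.span {ϖ})ˣ) (hψ : ψ₁ ≠ ψ₂)
    (htr : ∀ g : G, ∃ t : O,
      algebraMap O K t = Matrix.trace (ρ g : Matrix (Fin 2) (Fin 2) K) ∧
      Ideal.Quotient.mk (Ideal.span {ϖ}) t = ↑(ψ₁ g) + ↑(ψ₂ g))
    (g₀ : G) (hg₀ : ψ₁ g₀ ≠ ψ₂ g₀)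
    (lam₁ lam₂ : O)
    (hlam₁ : Ideal.Quotient.mk (Ideal.span {ϖ}) lam₁ = ↑(ψ₁ g₀))
    (hlam₂ : Ideal.Quotient.mk (Ideal.span {ϖ}) lam₂ = ↑(ψ₂ g₀))
    (hdiag : (ρ g₀ : Matrix (Fin 2) (Fin 2) K) =
      Matrix.diagonal ![algebraMap O K lam₁, algebraMap O K lam₂])
    (n : ℕ)
    (hord : Ideal.span {x : O | ∃ g g' : G,
        algebraMap O K x = (ρ g : Matrix (Fin 2) (Fin 2) K) 0 1 *
          (ρ g' : Matrix (Fin 2) (Fin 2) K) 1 0} = Ideal.span {ϖ ^ n}) :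
    Nat.card (Quot (fun T T' : {T : Submodule O (Fin 2 → K) // IsLat T ∧ IsStable ρ T} =>
      LatIso ρ T.1 T'.1)) = n + 1 := by
  classical
  have hinj : Function.Injective (algebraMap O K) := IsFractionRing.injective O K
  have two01 : (0 : Fin 2) ≠ 1 := by decide
  have hmv : ∀ (M : Matrix (Fin 2) (Fin 2) K) (v : Fin 2 → K) (i : Fin 2),
      Matrix.mulVec M v i = M i 0 * v 0 + M i 1 * v 1 := by
    intro M v i
    simp [Matrix.mulVec, dotProduct, Fin.sum_univ_two]
  have hrmul : ∀ g h : G, ((ρ (g * h) : GL (Fin 2) K) : Matrix (Fin 2) (Fin 2) K)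
      = ((ρ g : GL (Fin 2) K) : Matrix (Fin 2) (Fin 2) K)
        * ((ρ h : GL (Fin 2) K) : Matrix (Fin 2) (Fin 2) K) := by
    intro g h; rw [map_mul]; rfl
  have hme : ∀ (g h : G) (i j : Fin 2),
      ((ρ (g * h) : GL (Fin 2) K) : Matrix (Fin 2) (Fin 2) K) i j
      = (ρ g : Matrix (Fin 2) (Fin 2) K) i 0 * (ρ h : Matrix (Fin 2) (Fin 2) K) 0 j
        + (ρ g : Matrix (Fin 2) (Fin 2) K) i 1 * (ρ h : Matrix (Fin 2) (Fin 2) K) 1 j := by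
    intro g h i j
    rw [hrmul, Matrix.mul_apply, Fin.sum_univ_two]
  have h00 : (ρ g₀ : Matrix (Fin 2) (Fin 2) K) 0 0 = algebraMap O K lam₁ := by
    rw [hdiag]; simp
  have h11 : (ρ g₀ : Matrix (Fin 2) (Fin 2) K) 1 1 = algebraMap O K lam₂ := by
    rw [hdiag]; simp
  have h01 : (ρ g₀ : Matrix (Fin 2) (Fin 2) K) 0 1 = 0 := by
    rw [hdiag]; exact Matrix.diagonal_apply_ne _ two01
  have h10 : (ρ g₀ : Matrix (Fin 2) (Fin 2) K) 1 0 = 0 := by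
    rw [hdiag]; exact Matrix.diagonal_apply_ne _ (Ne.symm two01)
  -- the difference of the eigenvalue lifts is a unit
  have hlamne : Ideal.Quotient.mk (Ideal.span {ϖ}) (lam₁ - lam₂) ≠ 0 := by
    rw [map_sub, hlam₁, hlam₂, sub_ne_zero]
    exact fun h => hg₀ (Units.ext h)
  have hwunit : IsUnit (lam₁ - lam₂) := by
    by_contra h
    apply hlamne
    rw [Ideal.Quotient.eq_zero_iff_mem,
      ← (IsDiscreteValuationRing.irreducible_iff_uniformizer ϖ).mp hϖ]
    exact h
  obtain ⟨w, hw⟩ := hwunit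
  have hwK : algebraMap O K ↑w⁻¹ * (algebraMap O K lam₁ - algebraMap O K lam₂) = 1 := by
    rw [← map_sub, ← map_mul, ← hw, Units.inv_mul, map_one]
  -- traces are integral
  have htrace : ∀ g : G, ∃ t : O, algebraMap O K t
      = (ρ g : Matrix (Fin 2) (Fin 2) K) 0 0 + (ρ g : Matrix (Fin 2) (Fin 2) K) 1 1 := by
    intro g; obtain ⟨t, ht, -⟩ := htr g
    exact ⟨t, by rw [ht, Matrix.trace_fin_two]⟩
  -- diagonal entries are integral
  have hAD : ∀ g : G, ∃ A D : O, algebraMap O K A = (ρ g : Matrix (Fin 2) (Fin 2) K) 0 0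
      ∧ algebraMap O K D = (ρ g : Matrix (Fin 2) (Fin 2) K) 1 1 := by
    intro g
    obtain ⟨t, ht⟩ := htrace g
    obtain ⟨t', ht'⟩ := htrace (g₀ * g)
    rw [hme g₀ g 0 0, hme g₀ g 1 1, h00, h01, h10, h11] at ht'
    refine ⟨↑w⁻¹ * (t' - lam₂ * t), ↑w⁻¹ * (lam₁ * t - t'), ?_, ?_⟩
    · rw [map_mul, map_sub, map_mul, ht, ht']
      linear_combination ((ρ g : Matrix (Fin 2) (Fin 2) K) 0 0) * hwK
    · rw [map_mul, map_sub, map_mul, ht, ht']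
      linear_combination ((ρ g : Matrix (Fin 2) (Fin 2) K) 1 1) * hwK
  choose Af Df hA hD using hAD
  -- products of off-diagonal entries are integral
  have hBC : ∀ g g' : G, ∃ X : O, algebraMap O K X
      = (ρ g : Matrix (Fin 2) (Fin 2) K) 0 1 * (ρ g' : Matrix (Fin 2) (Fin 2) K) 1 0 := by
    intro g g'
    refine ⟨Af (g * g') - Af g * Af g', ?_⟩
    rw [map_sub, map_mul, hA, hA, hA, hme g g' 0 0]
    ring
  choose X hX using hBC
  -- locate a generator of the reducibility ideal among the products
  have hXmem : ∀ g g' : G, X g g' ∈ Ideal.span {ϖ ^ n} := by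
    intro g g'
    rw [← hord]
    exact Ideal.subset_span ⟨g, g', hX g g'⟩
  have hϖn0 : (ϖ : O) ^ n ≠ 0 := pow_ne_zero _ hϖ.ne_zero
  have hexgen : ∃ x ∈ {x : O | ∃ g g' : G,
      algebraMap O K x = (ρ g : Matrix (Fin 2) (Fin 2) K) 0 1 *
        (ρ g' : Matrix (Fin 2) (Fin 2) K) 1 0}, Associated x (ϖ ^ n) := by
    by_contra hcon
    push_neg at hcon
    have hsub : {x : O | ∃ g g' : G,
        algebraMap O K x = (ρ g : Matrix (Fin 2) (Fin 2) K) 0 1 *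
          (ρ g' : Matrix (Fin 2) (Fin 2) K) 1 0} ⊆ (Ideal.span {ϖ ^ (n+1)} : Set O) := by
      intro x hx
      have hx1 : x ∈ Ideal.span {ϖ ^ n} := hord ▸ Ideal.subset_span hx
      obtain ⟨t, rfl⟩ := Ideal.mem_span_singleton.mp hx1
      have htnu : ¬IsUnit t := by
        intro hu
        exact hcon _ hx (Associated.symm ⟨hu.unit, by simp⟩)
      have hdvd : ϖ ∣ t := by
        rw [← Ideal.mem_span_singleton,
          ← (IsDiscreteValuationRing.irreducible_iff_uniformizer ϖ).mp hϖ]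
        exact htnu
      obtain ⟨t', rfl⟩ := hdvd
      rw [SetLike.mem_coe, Ideal.mem_span_singleton]
      exact ⟨t', by ring⟩
    have hle : Ideal.span {ϖ ^ n} ≤ Ideal.span {ϖ ^ (n+1)} := by
      rw [← hord]; exact Ideal.span_le.mpr hsub
    have hdvd2 : ϖ ^ (n+1) ∣ ϖ ^ n :=
      Ideal.mem_span_singleton.mp (hle (Ideal.mem_span_singleton_self _))
    have := (pow_dvd_pow_iff hϖ.ne_zero hϖ.not_isUnit).mp hdvd2
    omega
  obtain ⟨c₀, hc₀S, hassoc⟩ := hexgen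
  obtain ⟨u, hc₀u⟩ := hassoc
  obtain ⟨g₁, g₂, hbc⟩ := hc₀S
  set bstar := (ρ g₁ : Matrix (Fin 2) (Fin 2) K) 0 1 with hbstar
  set cstar := (ρ g₂ : Matrix (Fin 2) (Fin 2) K) 1 0 with hcstar
  have hc₀0 : c₀ ≠ 0 := by
    intro h; rw [h, zero_mul] at hc₀u; exact hϖn0 hc₀u.symm
  have hbcK : bstar * cstar = algebraMap O K c₀ := hbc.symm
  have hprod0 : bstar * cstar ≠ 0 := by
    rw [hbcK]
    exact fun h => hc₀0 (hinj (by rw [h, map_zero]))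
  have hbne : bstar ≠ 0 := left_ne_zero_of_mul hprod0
  have hcne : cstar ≠ 0 := right_ne_zero_of_mul hprod0
  have hbfac : ∀ g : G, ∃ y : O,
      (ρ g : Matrix (Fin 2) (Fin 2) K) 0 1 = algebraMap O K y * bstar := by
    intro g
    obtain ⟨m, hm⟩ := Ideal.mem_span_singleton.mp (hXmem g g₂)
    refine ⟨↑u * m, ?_⟩
    apply mul_right_cancel₀ hcne
    have h1 : (ρ g : Matrix (Fin 2) (Fin 2) K) 0 1 * cstar = algebraMap O K (X g g₂) :=
      (hX g g₂).symm
    rw [h1, hm, mul_assoc, hbcK, ← map_mul]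
    congr 1
    rw [← hc₀u]; ring
  have hcfac : ∀ g : G, ∃ z : O,
      (ρ g : Matrix (Fin 2) (Fin 2) K) 1 0 = algebraMap O K z * cstar := by
    intro g
    obtain ⟨m, hm⟩ := Ideal.mem_span_singleton.mp (hXmem g₁ g)
    refine ⟨↑u * m, ?_⟩
    apply mul_left_cancel₀ hbne
    have h1 : bstar * (ρ g : Matrix (Fin 2) (Fin 2) K) 1 0 = algebraMap O K (X g₁ g) :=
      (hX g₁ g).symm
    rw [h1, hm]
    rw [show bstar * (algebraMap O K (↑u * m) * cstar)
        = algebraMap O K (↑u * m) * (bstar * cstar) by ring, hbcK, ← map_mul]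
    congr 1
    rw [← hc₀u]; ring
  choose yb hyb using hbfac
  choose zc hzc using hcfac
  -- the standard lattices
  have hπ0 : algebraMap O K ϖ ≠ 0 := fun h => hϖ.ne_zero (hinj (by rw [h, map_zero]))
  set e₀ : Fin 2 → K := Pi.single 0 1 with he₀
  set q : ℕ → K := fun j => cstar / (algebraMap O K ϖ) ^ j with hq
  have hq0 : ∀ j, q j ≠ 0 := fun j => div_ne_zero hcne (pow_ne_zero _ hπ0)
  set TT : ℕ → Submodule O (Fin 2 → K) :=
    fun j => Submodule.span O {e₀, Pi.single 1 (q j)} with hTT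
  have hsmul : ∀ (o : O) (v : Fin 2 → K) (i : Fin 2), (o • v) i = algebraMap O K o * v i := by
    intro o v i; rw [Pi.smul_apply, Algebra.smul_def]
  have hmemTT : ∀ (j : ℕ) (v : Fin 2 → K), v ∈ TT j ↔ ∃ o₁ o₂ : O,
      algebraMap O K o₁ = v 0 ∧ algebraMap O K o₂ * q j = v 1 := by
    intro j v
    rw [hTT]
    rw [Submodule.mem_span_pair]
    constructor
    · rintro ⟨o₁, o₂, rfl⟩
      exact ⟨o₁, o₂, by simp [hsmul, he₀, Pi.single_eq_same, Pi.single_eq_of_ne (Ne.symm two01)],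
        by simp [hsmul, he₀, Pi.single_eq_same, Pi.single_eq_of_ne two01]⟩
    · rintro ⟨o₁, o₂, h1, h2⟩
      refine ⟨o₁, o₂, funext fun i => ?_⟩
      fin_cases i
      · simpa [hsmul, he₀, Pi.single_eq_same, Pi.single_eq_of_ne (Ne.symm two01)] using h1
      · simpa [hsmul, he₀, Pi.single_eq_same, Pi.single_eq_of_ne two01] using h2
  have hcq : ∀ j : ℕ, algebraMap O K ϖ ^ j * q j = cstar := by
    intro j
    show algebraMap O K ϖ ^ j * (cstar / algebraMap O K ϖ ^ j) = cstar
    exact mul_div_cancel₀ _ (pow_ne_zero _ hπ0)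
  have hbq : ∀ j ≤ n, algebraMap O K (↑u⁻¹ * ϖ ^ (n - j)) = bstar * q j := by
    intro j hj
    show algebraMap O K (↑u⁻¹ * ϖ ^ (n - j)) = bstar * (cstar / algebraMap O K ϖ ^ j)
    rw [← mul_div_assoc, eq_div_iff (pow_ne_zero _ hπ0), ← map_pow, ← map_mul]
    have hexp : (↑u⁻¹ : O) * ϖ ^ (n - j) * ϖ ^ j = c₀ := by
      rw [mul_assoc, ← pow_add]
      have hnj : n - j + j = n := by omega
      rw [hnj, ← hc₀u]
      rw [show (↑u⁻¹ : O) * (c₀ * ↑u) = c₀ * (↑u⁻¹ * ↑u) by ring, Units.inv_mul, mul_one]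
    rw [hexp, ← hbcK]
  have hTTlat : ∀ j : ℕ, IsLat (TT j) := by
    intro j
    constructor
    · rw [hTT]
      exact Submodule.fg_span (Set.toFinite _)
    · rw [eq_top_iff]
      intro v _
      have hv : v = v 0 • e₀ + (v 1 / q j) • (Pi.single 1 (q j) : Fin 2 → K) := by
        funext i
        fin_cases i
        · simp [he₀, Pi.single_eq_same, Pi.single_eq_of_ne (Ne.symm two01)]
        · simp [he₀, Pi.single_eq_same, Pi.single_eq_of_ne two01, div_mul_cancel₀ _ (hq0 j)]
      rw [hv]
      have h1 : e₀ ∈ TT j := (hmemTT j e₀).mpr ⟨1, 0, by simp [he₀, Pi.single_eq_same],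
        by simp [he₀, Pi.single_eq_of_ne (Ne.symm two01)]⟩
      have h2 : Pi.single 1 (q j) ∈ TT j := (hmemTT j _).mpr ⟨0, 1, by
        simp [Pi.single_eq_of_ne two01], by simp [Pi.single_eq_same]⟩
      exact Submodule.add_mem _
        (Submodule.smul_mem _ _ (Submodule.subset_span h1))
        (Submodule.smul_mem _ _ (Submodule.subset_span h2))
  have hTTstab : ∀ j ≤ n, IsStable ρ (TT j) := by
    intro j hj g v hv
    obtain ⟨o₁, o₂, h1, h2⟩ := (hmemTT j v).mp hv
    refine (hmemTT j _).mpr ⟨Af g * o₁ + yb g * (↑u⁻¹ * ϖ ^ (n - j)) * o₂,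
      zc g * ϖ ^ j * o₁ + Df g * o₂, ?_, ?_⟩
    · rw [hmv, ← hA g, hyb g, ← h1, ← h2]
      have hbq' := hbq j hj
      simp only [map_add, map_mul, map_pow] at hbq' ⊢
      linear_combination (algebraMap O K (yb g) * algebraMap O K o₂) * hbq'
    · rw [hmv, hzc g, ← hD g, ← h1, ← h2]
      have hcq' := hcq j
      simp only [map_add, map_mul, map_pow] at hcq' ⊢
      linear_combination (algebraMap O K (zc g) * algebraMap O K o₁) * hcq'
  -- every stable lattice is a scaled standard lattice
  have hclass : ∀ T : Submodule O (Fin 2 → K), IsLat T → IsStable ρ T →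
      ∃ j ≤ n, ∃ s : K, s ≠ 0 ∧ (∀ v ∈ TT j, s • v ∈ T) ∧ (∀ v ∈ T, s⁻¹ • v ∈ TT j) := by
    intro T hlat hstab
    have hdec : ∀ v ∈ T, (Pi.single 0 (v 0) : Fin 2 → K) ∈ T
        ∧ (Pi.single 1 (v 1) : Fin 2 → K) ∈ T := by
      intro v hv
      have hkey : (Pi.single 0 (v 0) : Fin 2 → K)
          = (↑w⁻¹ : O) • (Matrix.mulVec (ρ g₀ : Matrix (Fin 2) (Fin 2) K) v - lam₂ • v) := by
        funext i
        rw [hsmul, Pi.sub_apply, hsmul, hmv]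
        fin_cases i
        · simp only [Fin.zero_eta, Fin.isValue, h00, h01, Pi.single_eq_same]
          linear_combination (-(v 0)) * hwK
        · simp only [Fin.mk_one, Fin.isValue, h10, h11]
          rw [Pi.single_eq_of_ne (Ne.symm two01)]
          ring
      have h1 : (Pi.single 0 (v 0) : Fin 2 → K) ∈ T := by
        rw [hkey]
        exact Submodule.smul_mem _ _
          (Submodule.sub_mem _ (hstab g₀ v hv) (Submodule.smul_mem _ _ hv))
      refine ⟨h1, ?_⟩
      have h2 : (Pi.single 1 (v 1) : Fin 2 → K) = v - Pi.single 0 (v 0) := by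
        funext i
        rw [Pi.sub_apply]
        fin_cases i
        · simp only [Fin.zero_eta, Fin.isValue, Pi.single_eq_of_ne two01, Pi.single_eq_same]
          ring
        · simp only [Fin.mk_one, Fin.isValue, Pi.single_eq_same,
            Pi.single_eq_of_ne (Ne.symm two01)]
          ring
      rw [h2]
      exact Submodule.sub_mem _ hv h1
    have hnz : ∀ i : Fin 2, ∃ v ∈ T, v i ≠ 0 := by
      intro i
      by_contra hall
      push_neg at hall
      have hsub : (T : Set (Fin 2 → K))
          ⊆ (LinearMap.ker (LinearMap.proj (R := K) (φ := fun _ : Fin 2 => K) i) : Set _) := by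
        intro v hv
        simp only [SetLike.mem_coe, LinearMap.mem_ker, LinearMap.proj_apply]
        exact hall v hv
      have hle := Submodule.span_le.mpr hsub
      rw [hlat.2] at hle
      have hm : (Pi.single i 1 : Fin 2 → K)
          ∈ LinearMap.ker (LinearMap.proj (R := K) (φ := fun _ : Fin 2 => K) i) :=
        hle trivial
      rw [LinearMap.mem_ker, LinearMap.proj_apply, Pi.single_eq_same] at hm
      exact one_ne_zero hm
    obtain ⟨x, hx⟩ := fg_cyclic _ (hlat.1.map (LinearMap.proj (R := O) (φ := fun _ : Fin 2 => K) 0))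
    obtain ⟨y, hy⟩ := fg_cyclic _ (hlat.1.map (LinearMap.proj (R := O) (φ := fun _ : Fin 2 => K) 1))
    have hx0 : x ≠ 0 := by
      obtain ⟨v, hvT, hv0⟩ := hnz 0
      intro hxz
      have hmm : v 0 ∈ Submodule.map (LinearMap.proj (R := O) (φ := fun _ : Fin 2 => K) 0) T :=
        Submodule.mem_map_of_mem hvT
      rw [hx, hxz, Submodule.span_zero_singleton] at hmm
      exact hv0 hmm
    have hy0 : y ≠ 0 := by
      obtain ⟨v, hvT, hv0⟩ := hnz 1
      intro hyz
      have hmm : v 1 ∈ Submodule.map (LinearMap.proj (R := O) (φ := fun _ : Fin 2 => K) 1) T :=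
        Submodule.mem_map_of_mem hvT
      rw [hy, hyz, Submodule.span_zero_singleton] at hmm
      exact hv0 hmm
    have hsx : (Pi.single 0 x : Fin 2 → K) ∈ T := by
      have : x ∈ Submodule.map (LinearMap.proj (R := O) (φ := fun _ : Fin 2 => K) 0) T := by
        rw [hx]; exact Submodule.mem_span_singleton_self x
      obtain ⟨v, hvT, hvx⟩ := this
      rw [← hvx]
      exact (hdec v hvT).1
    have hsy : (Pi.single 1 y : Fin 2 → K) ∈ T := by
      have : y ∈ Submodule.map (LinearMap.proj (R := O) (φ := fun _ : Fin 2 => K) 1) T := by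
        rw [hy]; exact Submodule.mem_span_singleton_self y
      obtain ⟨v, hvT, hvy⟩ := this
      rw [← hvy]
      exact (hdec v hvT).2
    have hmemT : ∀ v : Fin 2 → K, v ∈ T ↔ ∃ o₁ o₂ : O,
        algebraMap O K o₁ * x = v 0 ∧ algebraMap O K o₂ * y = v 1 := by
      intro v
      constructor
      · intro hv
        have hv0 : v 0 ∈ Submodule.span O {x} := by
          rw [← hx]; exact Submodule.mem_map_of_mem hv
        have hv1 : v 1 ∈ Submodule.span O {y} := by
          rw [← hy]; exact Submodule.mem_map_of_mem hv
        obtain ⟨o₁, ho₁⟩ := Submodule.mem_span_singleton.mp hv0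
        obtain ⟨o₂, ho₂⟩ := Submodule.mem_span_singleton.mp hv1
        exact ⟨o₁, o₂, by rw [← Algebra.smul_def]; exact ho₁, by rw [← Algebra.smul_def]; exact ho₂⟩
      · rintro ⟨o₁, o₂, h1, h2⟩
        have hveq : v = o₁ • (Pi.single 0 x : Fin 2 → K) + o₂ • (Pi.single 1 y : Fin 2 → K) := by
          funext i
          rw [Pi.add_apply, hsmul, hsmul]
          fin_cases i
          · simp only [Fin.zero_eta, Fin.isValue, Pi.single_eq_same, Pi.single_eq_of_ne two01]
            linear_combination - h1
          · simp only [Fin.mk_one, Fin.isValue, Pi.single_eq_same,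
              Pi.single_eq_of_ne (Ne.symm two01)]
            linear_combination - h2
        rw [hveq]
        exact Submodule.add_mem _ (Submodule.smul_mem _ _ hsx) (Submodule.smul_mem _ _ hsy)
    -- the stability constraints
    obtain ⟨s₁, hs₁⟩ : ∃ s₁ : O, algebraMap O K s₁ * y = cstar * x := by
      have hmem := hstab g₂ _ hsx
      obtain ⟨o₁, o₂, -, h2⟩ := (hmemT _).mp hmem
      refine ⟨o₂, ?_⟩
      rw [h2, hmv, Pi.single_eq_same, Pi.single_eq_of_ne (Ne.symm two01), ← hcstar]
      ring
    obtain ⟨s₂, hs₂⟩ : ∃ s₂ : O, algebraMap O K s₂ * x = bstar * y := by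
      have hmem := hstab g₁ _ hsy
      obtain ⟨o₁, o₂, h1, -⟩ := (hmemT _).mp hmem
      refine ⟨o₁, ?_⟩
      rw [h1, hmv, Pi.single_eq_same, Pi.single_eq_of_ne two01, ← hbstar]
      ring
    have hs₁0 : s₁ ≠ 0 := by
      intro h
      rw [h, map_zero, zero_mul] at hs₁
      exact mul_ne_zero hcne hx0 hs₁.symm
    have hs₁s₂ : s₁ * s₂ = c₀ := by
      apply hinj
      have hxy0 : x * y ≠ 0 := mul_ne_zero hx0 hy0
      apply mul_right_cancel₀ hxy0
      rw [map_mul]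
      calc algebraMap O K s₁ * algebraMap O K s₂ * (x * y)
          = (algebraMap O K s₁ * y) * (algebraMap O K s₂ * x) := by ring
        _ = (cstar * x) * (bstar * y) := by rw [hs₁, hs₂]
        _ = (bstar * cstar) * (x * y) := by ring
        _ = algebraMap O K c₀ * (x * y) := by rw [hbcK]
    obtain ⟨j, u₁, hju⟩ := IsDiscreteValuationRing.eq_unit_mul_pow_irreducible hs₁0 hϖ
    have hjn : j ≤ n := by
      have hd1 : ϖ ^ j ∣ s₁ := ⟨↑u₁, by rw [hju]; ring⟩
      have hd2 : s₁ ∣ ϖ ^ n := ⟨s₂ * ↑u, by rw [← hc₀u, ← hs₁s₂]; ring⟩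
      exact (pow_dvd_pow_iff hϖ.ne_zero hϖ.not_isUnit).mp (hd1.trans hd2)
    -- the scaling relation : x * q j = u₁ * y
    have hxq : x * q j = algebraMap O K ↑u₁ * y := by
      apply mul_left_cancel₀ (pow_ne_zero j hπ0)
      calc algebraMap O K ϖ ^ j * (x * q j) = (algebraMap O K ϖ ^ j * q j) * x := by ring
        _ = cstar * x := by rw [hcq j]
        _ = algebraMap O K s₁ * y := hs₁.symm
        _ = algebraMap O K ϖ ^ j * (algebraMap O K ↑u₁ * y) := by
            rw [hju, map_mul, map_pow]; ring
    refine ⟨j, hjn, x, hx0, ?_, ?_⟩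
    · intro v hv
      obtain ⟨o₁, o₂, h1, h2⟩ := (hmemTT j v).mp hv
      refine (hmemT _).mpr ⟨o₁, o₂ * ↑u₁, ?_, ?_⟩
      · rw [Pi.smul_apply, ← h1, smul_eq_mul]; ring
      · rw [Pi.smul_apply, ← h2, smul_eq_mul, map_mul]
        calc algebraMap O K o₂ * algebraMap O K ↑u₁ * y
            = algebraMap O K o₂ * (algebraMap O K ↑u₁ * y) := by ring
          _ = algebraMap O K o₂ * (x * q j) := by rw [hxq]
          _ = x * (algebraMap O K o₂ * q j) := by ring
    · intro v hv
      obtain ⟨o₁, o₂, h1, h2⟩ := (hmemT v).mp hv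
      refine (hmemTT j _).mpr ⟨o₁, o₂ * ↑u₁⁻¹, ?_, ?_⟩
      · rw [Pi.smul_apply, ← h1, smul_eq_mul]
        field_simp
      · rw [Pi.smul_apply, ← h2, smul_eq_mul, map_mul]
        apply mul_left_cancel₀ hx0
        rw [show x * (x⁻¹ * (algebraMap O K o₂ * y)) = algebraMap O K o₂ * y by
          field_simp]
        calc x * (algebraMap O K o₂ * algebraMap O K ↑u₁⁻¹ * q j)
            = (x * q j) * algebraMap O K ↑u₁⁻¹ * algebraMap O K o₂ := by ring
          _ = algebraMap O K ↑u₁ * y * algebraMap O K ↑u₁⁻¹ * algebraMap O K o₂ := by rw [hxq]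
          _ = (algebraMap O K (↑u₁ * ↑u₁⁻¹)) * (algebraMap O K o₂ * y) := by
              rw [map_mul]; ring
          _ = algebraMap O K o₂ * y := by rw [Units.mul_inv, map_one, one_mul]
  -- rigidity: distinct standard lattices are non-isomorphic
  have hg₁mem : ∀ m : ℕ, (Pi.single 1 (q m) : Fin 2 → K) ∈ TT m := by
    intro m
    refine (hmemTT m _).mpr ⟨0, 1, ?_, ?_⟩
    · rw [map_zero, Pi.single_eq_of_ne two01]
    · rw [map_one, one_mul, Pi.single_eq_same]
  have he₀mem : ∀ m : ℕ, e₀ ∈ TT m := by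
    intro m
    refine (hmemTT m _).mpr ⟨1, 0, ?_, ?_⟩
    · rw [map_one, he₀, Pi.single_eq_same]
    · rw [map_zero, zero_mul, he₀, Pi.single_eq_of_ne (Ne.symm two01)]
  have hwne : algebraMap O K lam₁ - algebraMap O K lam₂ ≠ 0 := by
    intro hz
    rw [hz, mul_zero] at hwK
    exact one_ne_zero hwK.symm
  have hz2 : algebraMap O K (zc g₂) = 1 := by
    have h := hzc g₂
    rw [← hcstar] at h
    exact mul_right_cancel₀ hcne (by rw [one_mul, ← h])
  have hmve₀ : Matrix.mulVec (ρ g₀ : Matrix (Fin 2) (Fin 2) K) e₀ = lam₁ • e₀ := by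
    funext i
    rw [hsmul, hmv]
    fin_cases i
    · simp only [Fin.zero_eta, Fin.isValue, h00, h01]
      ring
    · simp only [Fin.mk_one, Fin.isValue, h10, h11]
      rw [he₀, Pi.single_eq_of_ne (Ne.symm two01)]
      ring
  have hmvg₁ : ∀ m : ℕ, Matrix.mulVec (ρ g₀ : Matrix (Fin 2) (Fin 2) K) (Pi.single 1 (q m))
      = lam₂ • (Pi.single 1 (q m) : Fin 2 → K) := by
    intro m
    funext i
    rw [hsmul, hmv]
    fin_cases i
    · simp only [Fin.zero_eta, Fin.isValue, h00, h01]
      rw [Pi.single_eq_of_ne two01]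
      ring
    · simp only [Fin.mk_one, Fin.isValue, h10, h11]
      ring
  have hrig : ∀ j, j ≤ n → ∀ k, k ≤ n → LatIso ρ (TT j) (TT k) → j = k := by
    intro j hj k hk hiso
    obtain ⟨e, he⟩ := hiso
    set u₀ : Fin 2 → K := (e ⟨e₀, he₀mem j⟩ : Fin 2 → K) with hu₀def
    set u₁ : Fin 2 → K := (e ⟨Pi.single 1 (q j), hg₁mem j⟩ : Fin 2 → K) with hu₁def
    have heig₀ : lam₁ • u₀ = Matrix.mulVec (ρ g₀ : Matrix (Fin 2) (Fin 2) K) u₀ := by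
      have hmem2 : Matrix.mulVec (ρ g₀ : Matrix (Fin 2) (Fin 2) K) e₀ ∈ TT j := by
        rw [hmve₀]; exact Submodule.smul_mem _ _ (he₀mem j)
      have heq := he g₀ e₀ (he₀mem j) hmem2
      have hsub : (⟨Matrix.mulVec (ρ g₀ : Matrix (Fin 2) (Fin 2) K) e₀, hmem2⟩ : TT j)
          = lam₁ • (⟨e₀, he₀mem j⟩ : TT j) := Subtype.ext (by
        show Matrix.mulVec (ρ g₀ : Matrix (Fin 2) (Fin 2) K) e₀ = lam₁ • e₀
        exact hmve₀)
      rw [hsub, map_smul] at heq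
      rw [hu₀def, ← heq]
      rfl
    have heig₁ : lam₂ • u₁ = Matrix.mulVec (ρ g₀ : Matrix (Fin 2) (Fin 2) K) u₁ := by
      have hmem2 : Matrix.mulVec (ρ g₀ : Matrix (Fin 2) (Fin 2) K) (Pi.single 1 (q j)) ∈ TT j := by
        rw [hmvg₁ j]; exact Submodule.smul_mem _ _ (hg₁mem j)
      have heq := he g₀ _ (hg₁mem j) hmem2
      have hsub : (⟨Matrix.mulVec (ρ g₀ : Matrix (Fin 2) (Fin 2) K) (Pi.single 1 (q j)), hmem2⟩ : TT j)
          = lam₂ • (⟨Pi.single 1 (q j), hg₁mem j⟩ : TT j) := Subtype.ext (by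
        show Matrix.mulVec (ρ g₀ : Matrix (Fin 2) (Fin 2) K) (Pi.single 1 (q j))
          = lam₂ • (Pi.single 1 (q j) : Fin 2 → K)
        exact hmvg₁ j)
      rw [hsub, map_smul] at heq
      rw [hu₁def, ← heq]
      rfl
    have hu₀1 : u₀ 1 = 0 := by
      have h := congrFun heig₀ 1
      rw [hsmul, hmv, h10, h11] at h
      have h2 : (algebraMap O K lam₁ - algebraMap O K lam₂) * u₀ 1 = 0 := by linear_combination h
      rcases mul_eq_zero.mp h2 with h' | h'
      · exact absurd h' hwne
      · exact h'
    have hu₁0 : u₁ 0 = 0 := by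
      have h := congrFun heig₁ 0
      rw [hsmul, hmv, h00, h01] at h
      have h2 : (algebraMap O K lam₁ - algebraMap O K lam₂) * u₁ 0 = 0 := by linear_combination - h
      rcases mul_eq_zero.mp h2 with h' | h'
      · exact absurd h' hwne
      · exact h'
    -- equivariance at g₂ relates u₁ to u₀
    have hmvg₂e₀ : Matrix.mulVec (ρ g₂ : Matrix (Fin 2) (Fin 2) K) e₀
        = Af g₂ • e₀ + (zc g₂ * ϖ ^ j) • (Pi.single 1 (q j) : Fin 2 → K) := by
      funext i
      rw [Pi.add_apply, hsmul, hsmul, hmv]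
      fin_cases i
      · simp only [Fin.zero_eta, Fin.isValue, he₀, Pi.single_eq_same,
          Pi.single_eq_of_ne two01, Pi.single_eq_of_ne (Ne.symm two01)]
        rw [← hA g₂]
        ring
      · simp only [Fin.mk_one, Fin.isValue, he₀, Pi.single_eq_same,
          Pi.single_eq_of_ne two01, Pi.single_eq_of_ne (Ne.symm two01)]
        rw [hzc g₂, map_mul, map_pow]
        linear_combination (-(algebraMap O K (zc g₂))) * hcq j
    have hmemg₂ : Matrix.mulVec (ρ g₂ : Matrix (Fin 2) (Fin 2) K) e₀ ∈ TT j := by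
      rw [hmvg₂e₀]
      exact Submodule.add_mem _ (Submodule.smul_mem _ _ (he₀mem j))
        (Submodule.smul_mem _ _ (hg₁mem j))
    have hkey2 := he g₂ e₀ (he₀mem j) hmemg₂
    have hsub2 : (⟨Matrix.mulVec (ρ g₂ : Matrix (Fin 2) (Fin 2) K) e₀, hmemg₂⟩ : TT j)
        = Af g₂ • (⟨e₀, he₀mem j⟩ : TT j)
          + (zc g₂ * ϖ ^ j) • (⟨Pi.single 1 (q j), hg₁mem j⟩ : TT j) :=
      Subtype.ext (by
        show Matrix.mulVec (ρ g₂ : Matrix (Fin 2) (Fin 2) K) e₀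
          = Af g₂ • e₀ + (zc g₂ * ϖ ^ j) • (Pi.single 1 (q j) : Fin 2 → K)
        exact hmvg₂e₀)
    rw [hsub2, map_add, map_smul, map_smul] at hkey2
    have hcomp1 := congrFun hkey2 1
    rw [Submodule.coe_add, SetLike.val_smul, SetLike.val_smul, Pi.add_apply, hsmul, hsmul,
      hmv, hzc g₂, hz2, one_mul] at hcomp1
    rw [← hu₀def, ← hu₁def, hu₀1] at hcomp1
    have hu₁1 : u₁ 1 = u₀ 0 * q j := by
      have hπj : (algebraMap O K ϖ) ^ j ≠ 0 := pow_ne_zero _ hπ0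
      apply mul_left_cancel₀ hπj
      calc (algebraMap O K ϖ) ^ j * u₁ 1
          = algebraMap O K (zc g₂ * ϖ ^ j) * u₁ 1 := by
            rw [map_mul, map_pow, hz2, one_mul]
        _ = cstar * u₀ 0 := by linear_combination hcomp1
        _ = ((algebraMap O K ϖ) ^ j * q j) * u₀ 0 := by rw [hcq j]
        _ = (algebraMap O K ϖ) ^ j * (u₀ 0 * q j) := by ring
    -- e is multiplication by the scalar u₀ 0
    have hescale : ∀ v (hv : v ∈ TT j), (e ⟨v, hv⟩ : Fin 2 → K) = (u₀ 0) • v := by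
      intro v hv
      obtain ⟨o₁, o₂, hv1, hv2⟩ := (hmemTT j v).mp hv
      have hvdec : (⟨v, hv⟩ : TT j) = o₁ • (⟨e₀, he₀mem j⟩ : TT j)
          + o₂ • (⟨Pi.single 1 (q j), hg₁mem j⟩ : TT j) := by
        apply Subtype.ext
        show v = o₁ • e₀ + o₂ • (Pi.single 1 (q j) : Fin 2 → K)
        funext i
        rw [Pi.add_apply, hsmul, hsmul]
        fin_cases i
        · simp only [Fin.zero_eta, Fin.isValue, he₀, Pi.single_eq_same,
            Pi.single_eq_of_ne two01]
          linear_combination - hv1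
        · simp only [Fin.mk_one, Fin.isValue, he₀, Pi.single_eq_same,
            Pi.single_eq_of_ne (Ne.symm two01)]
          linear_combination - hv2
      rw [hvdec, map_add, map_smul, map_smul]
      funext i
      rw [Submodule.coe_add, SetLike.val_smul, SetLike.val_smul, Pi.add_apply, hsmul, hsmul,
        Pi.smul_apply, smul_eq_mul, ← hu₀def, ← hu₁def]
      fin_cases i
      · simp only [Fin.zero_eta, Fin.isValue]
        rw [hu₁0, ← hv1]
        ring
      · simp only [Fin.mk_one, Fin.isValue]
        rw [hu₀1, hu₁1, ← hv2]
        ring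
    have hs0 : u₀ 0 ≠ 0 := by
      intro hzz
      have h0 : (e ⟨e₀, he₀mem j⟩ : Fin 2 → K) = 0 := by
        rw [hescale e₀ (he₀mem j), hzz, zero_smul]
      have h1 : (e ⟨e₀, he₀mem j⟩) = 0 := Subtype.ext h0
      rw [LinearEquiv.map_eq_zero_iff] at h1
      have h2 : e₀ = 0 := congrArg Subtype.val h1
      have h3 := congrFun h2 0
      rw [he₀, Pi.single_eq_same] at h3
      have h4 : (1 : K) = 0 := by simpa using h3
      exact one_ne_zero h4
    have hfwd : ∀ v ∈ TT j, (u₀ 0) • v ∈ TT k := by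
      intro v hv
      rw [← hescale v hv]
      exact (e ⟨v, hv⟩).2
    have hbwd : ∀ v ∈ TT k, (u₀ 0)⁻¹ • v ∈ TT j := by
      intro v hv
      obtain ⟨t, ht⟩ := e.surjective ⟨v, hv⟩
      have hts : (u₀ 0) • (t : Fin 2 → K) = v := by
        have := hescale (t : Fin 2 → K) t.2
        rw [Subtype.coe_eta, ht] at this
        exact this.symm
      rw [← hts, smul_smul, inv_mul_cancel₀ hs0, one_smul]
      exact t.2
    -- compare the generators
    obtain ⟨a₁, a₂, ha1, ha2⟩ := (hmemTT j _).mp (hbwd e₀ (he₀mem k))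
    obtain ⟨b₁, b₂, hb1, hb2⟩ := (hmemTT k _).mp (hfwd e₀ (he₀mem j))
    rw [Pi.smul_apply, smul_eq_mul, he₀, Pi.single_eq_same, mul_one] at ha1 hb1
    obtain ⟨c₁, c₂, hc1, hc2⟩ := (hmemTT j _).mp (hbwd (Pi.single 1 (q k)) (hg₁mem k))
    obtain ⟨d₁, d₂, hd1, hd2⟩ := (hmemTT k _).mp (hfwd (Pi.single 1 (q j)) (hg₁mem j))
    rw [Pi.smul_apply, smul_eq_mul, Pi.single_eq_same] at hc2 hd2
    -- b₁ is a unit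
    have hab : a₁ * b₁ = 1 := by
      apply hinj
      rw [map_mul, map_one, ha1, hb1]
      exact inv_mul_cancel₀ hs0
    -- c₂ * d₂ = 1
    have hcd : c₂ * d₂ = 1 := by
      apply hinj
      rw [map_mul, map_one]
      have hqk0 := hq0 k
      apply mul_right_cancel₀ hqk0
      calc algebraMap O K c₂ * algebraMap O K d₂ * q k
          = algebraMap O K c₂ * (algebraMap O K d₂ * q k) := by ring
        _ = algebraMap O K c₂ * (u₀ 0 * q j) := by rw [hd2]
        _ = u₀ 0 * (algebraMap O K c₂ * q j) := by ring
        _ = u₀ 0 * ((u₀ 0)⁻¹ * q k) := by rw [hc2]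
        _ = 1 * q k := by rw [← mul_assoc, mul_inv_cancel₀ hs0]
    -- conclude
    have hqq : q k = algebraMap O K (b₁ * c₂) * q j := by
      rw [map_mul]
      calc q k = u₀ 0 * ((u₀ 0)⁻¹ * q k) := by
            rw [← mul_assoc, mul_inv_cancel₀ hs0, one_mul]
        _ = u₀ 0 * (algebraMap O K c₂ * q j) := by rw [hc2]
        _ = algebraMap O K b₁ * algebraMap O K c₂ * q j := by rw [hb1]; ring
    have hππ : (algebraMap O K ϖ) ^ j = algebraMap O K (b₁ * c₂) * (algebraMap O K ϖ) ^ k := by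
      apply mul_left_cancel₀ hcne
      calc cstar * (algebraMap O K ϖ) ^ j
          = ((algebraMap O K ϖ) ^ k * q k) * (algebraMap O K ϖ) ^ j := by rw [hcq k]
        _ = ((algebraMap O K ϖ) ^ k * (algebraMap O K (b₁ * c₂) * q j))
            * (algebraMap O K ϖ) ^ j := by rw [hqq]
        _ = (algebraMap O K (b₁ * c₂)) * ((algebraMap O K ϖ) ^ j * q j)
            * (algebraMap O K ϖ) ^ k := by ring
        _ = (algebraMap O K (b₁ * c₂)) * cstar * (algebraMap O K ϖ) ^ k := by rw [hcq j]
        _ = cstar * (algebraMap O K (b₁ * c₂) * (algebraMap O K ϖ) ^ k) := by ring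
    have hfinal : (1 : O) * ϖ ^ j = (b₁ * c₂) * ϖ ^ k := by
      apply hinj
      simp only [map_mul, map_one, map_pow]
      simp only [map_mul] at hππ
      linear_combination hππ
    have hUb : IsUnit b₁ := IsUnit.of_mul_eq_one a₁ (by rw [mul_comm]; exact hab)
    have hUc : IsUnit c₂ := IsUnit.of_mul_eq_one d₂ hcd
    have hU : IsUnit (b₁ * c₂) := hUb.mul hUc
    refine IsDiscreteValuationRing.unit_mul_pow_congr_pow hϖ hϖ 1 hU.unit j k ?_
    rw [Units.val_one, one_mul, IsUnit.unit_spec]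
    linear_combination hfinal
  -- conclusion: counting the classes
  have hbij : Function.Bijective (fun j : Fin (n+1) =>
      Quot.mk (fun T T' : {T : Submodule O (Fin 2 → K) // IsLat T ∧ IsStable ρ T} =>
        LatIso ρ T.1 T'.1)
        ⟨TT j.1, hTTlat j.1, hTTstab j.1 (Nat.lt_succ_iff.mp j.isLt)⟩) := by
    constructor
    · intro j k hjk
      have hg := Quot.eqvGen_exact hjk
      have hequiv : Equivalence
          (fun T T' : {T : Submodule O (Fin 2 → K) // IsLat T ∧ IsStable ρ T} =>
            LatIso ρ T.1 T'.1) := by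
        constructor
        · intro T; exact latIso_refl ρ T.1
        · intro T T' h; exact latIso_symm T.2.2 h
        · intro a b c h1 h2; exact latIso_trans h1 h2
      have hrel := (Equivalence.eqvGen_iff hequiv).mp hg
      exact Fin.ext (hrig j.1 (Nat.lt_succ_iff.mp j.isLt) k.1 (Nat.lt_succ_iff.mp k.isLt) hrel)
    · intro tq
      obtain ⟨T⟩ := tq
      obtain ⟨j, hj, s, hs, hf1, hf2⟩ := hclass T.1 T.2.1 T.2.2
      exact ⟨⟨j, by omega⟩, Quot.sound (latIso_smul ρ s hs _ _ hf1 hf2)⟩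
  calc Nat.card (Quot (fun T T' : {T : Submodule O (Fin 2 → K) // IsLat T ∧ IsStable ρ T} =>
        LatIso ρ T.1 T'.1))
      = Nat.card (Fin (n+1)) := (Nat.card_eq_of_bijective _ hbij).symm
    _ = n + 1 := by simp

end
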